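/- For any n and d, the number D(n,d) of permutations of {1,...,n} with total displacement 2d equals the sum of the weights ω(mz) over all Motzkin paths mz of width n and area d, i.e., D(n,d) = Σ_{mz ∈ MZ(n,d)} ω(mz). -/
import Mathlib


/-- Moves of a Motzkin path: Up-right, Horizontal-right, Down-right. -/
inductive Move : Type
  | U : Move
  | H : Move
  | D : Move
deriving DecidableEq

open Move

/-- The vertical step of a move. -/
def Move.step : Move → ℤ
  | U => 1
  | H => 0
  | D => -1

/-- The height of a path after its first `i` moves. -/
def heightAt (mz : List Move) (i : ℕ) : ℤ :=
  ((mz.take i).map Move.step).sum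

/-- A word over {U,H,D} is a Motzkin path if it never goes below the x-axis
and ends on the x-axis. -/
def IsMotzkin (mz : List Move) : Prop :=
  (∀ i, 0 ≤ heightAt mz i) ∧ heightAt mz mz.length = 0

/-- The area between the x-axis and the path (sum of heights at integer points). -/
def area (mz : List Move) : ℤ :=
  ∑ i ∈ Finset.range (mz.length + 1), heightAt mz i

/-- `MZ n A` is the set of Motzkin paths of width `n` and area `A`. -/
def MZ (n A : ℕ) : Set (List Move) :=
  {mz | mz.length = n ∧ IsMotzkin mz ∧ area mz = A}

/-- The weight `ω_i` of the `i`-th move (0-indexed): it is `h_i` for U and D moves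
(height after the move for U, before the move for D) and `2h_i + 1` for H moves. -/
def moveWeight (mz : List Move) (i : ℕ) : ℤ :=
  match mz[i]? with
  | some U => heightAt mz (i + 1)
  | some D => heightAt mz i
  | some H => 2 * heightAt mz i + 1
  | none => 1

/-- The weight `ω(mz)` of a Motzkin path. -/
def weight (mz : List Move) : ℤ :=
  ∏ i ∈ Finset.range mz.length, moveWeight mz i

/-- The total displacement `D(π) = Σ_i |i - π(i)|` of a permutation. -/
def totalDisp {n : ℕ} (π : Equiv.Perm (Fin n)) : ℤ :=
  ∑ i : Fin n, |((π i : ℕ) : ℤ) - ((i : ℕ) : ℤ)|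

/-- The word over {U,H,D} associated to a permutation. -/
def toPath {n : ℕ} (π : Equiv.Perm (Fin n)) : List Move :=
  (List.finRange n).map fun i : Fin n =>
    if (i : ℕ) < (π i : ℕ) ∧ (i : ℕ) < (π.symm i : ℕ) then U
    else if (π i : ℕ) < (i : ℕ) ∧ (π.symm i : ℕ) < (i : ℕ) then D
    else H

/-- The last fall length: the length of the maximal suffix consisting of D moves. -/
def lastFall (mz : List Move) : ℕ :=
  (mz.reverse.takeWhile (fun m => decide (m = D))).length

/-- The maximum height of a path. -/
def maxHeight (mz : List Move) : ℕ :=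
  (Finset.range (mz.length + 1)).sup fun i => (heightAt mz i).toNat

/-- `flatsAt mz k` is the number of H moves of `mz` made at height `k`. -/
def flatsAt (mz : List Move) (k : ℕ) : ℕ :=
  ((Finset.range mz.length).filter fun j => mz[j]? = some H ∧ heightAt mz j = (k : ℤ)).card

/-- `peaksAt mz k` is the number of U moves of `mz` ending at height `k`. -/
def peaksAt (mz : List Move) (k : ℕ) : ℕ :=
  ((Finset.range mz.length).filter fun j => mz[j]? = some U ∧ heightAt mz (j + 1) = (k : ℤ)).card

/-- `downsAt mz k` is the number of D moves of `mz` starting at height `k`. -/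
def downsAt (mz : List Move) (k : ℕ) : ℕ :=
  ((Finset.range mz.length).filter fun j => mz[j]? = some D ∧ heightAt mz j = (k : ℤ)).card

/-- A candidate building sequence `(f_0, p_1, f_1, …, p_h, f_h)`, recorded as its
height `h` together with the flat counts `f` and peak counts `p`. -/
structure BSeq where
  h : ℕ
  f : ℕ → ℕ
  p : ℕ → ℕ

/-- `Sset n A` is the set of building sequences for width `n` and area `A`:
all `p`-entries `p_1, …, p_h` are positive, entries beyond the height are zero, and the
width and area conditions hold. -/
def Sset (n A : ℕ) : Set BSeq :=
  {a | (∀ i, 1 ≤ i → i ≤ a.h → 0 < a.p i) ∧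
       a.p 0 = 0 ∧
       (∀ i, a.h < i → a.p i = 0) ∧
       (∀ i, a.h < i → a.f i = 0) ∧
       (∑ i ∈ Finset.range (a.h + 1), a.f i) + 2 * (∑ i ∈ Finset.Icc 1 a.h, a.p i) = n ∧
       (∑ i ∈ Finset.range (a.h + 1), i * a.f i) +
         (∑ i ∈ Finset.Icc 1 a.h, (2 * i - 1) * a.p i) = A}

/-- `mz` has building sequence `a`. -/
def hasBuildSeq (mz : List Move) (a : BSeq) : Prop :=
  maxHeight mz = a.h ∧ (∀ i, flatsAt mz i = a.f i) ∧ (∀ i, peaksAt mz i = a.p i)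

/-- `perm(a) = ∏_{i=0}^h (2i+1)^{f_i} · ∏_{i=1}^h i^{2p_i}`. -/
def permWeight (a : BSeq) : ℕ :=
  (∏ i ∈ Finset.range (a.h + 1), (2 * i + 1) ^ a.f i) *
    ∏ i ∈ Finset.Icc 1 a.h, i ^ (2 * a.p i)

/-- `m(a)`, the number of Motzkin paths with building sequence `a`. -/
def mcount (a : BSeq) : ℕ :=
  Nat.choose (a.f a.h + a.p a.h - 1) (a.p a.h - 1) *
    (∏ i ∈ Finset.Icc 1 (a.h - 1),
      Nat.choose (a.p (i + 1) + a.f i) (a.f i) *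
        Nat.choose (a.p (i + 1) + a.f i + a.p i - 1) (a.p i - 1)) *
    Nat.choose (a.p 1 + a.f 0) (a.f 0)

/-- `M(n,A,l)`: the number of Motzkin paths of width `n`, area `A` and last fall length `l`
(for negative arguments there are no such paths, so the value is `0`; the value at
`(0,0,0)` is `1`, counting the empty path). -/
noncomputable def Mcount (n A l : ℤ) : ℕ :=
  Nat.card {mz : List Move // (mz.length : ℤ) = n ∧ IsMotzkin mz ∧ area mz = A ∧
    (lastFall mz : ℤ) = l}

/-- `D(n,d,l)`: the sum of the weights of all Motzkin paths of width `n`, area `d` and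
last fall length `l`. -/
noncomputable def Dw (n d l : ℤ) : ℤ :=
  ∑ᶠ mz ∈ {mz : List Move | (mz.length : ℤ) = n ∧ IsMotzkin mz ∧ area mz = d ∧
    (lastFall mz : ℤ) = l}, weight mz

/-- `M(n,A,h,p)`: the number of Motzkin paths of width `n`, area `A`, maximum height `h`,
with exactly `p` U-moves ending at height `h` and no H-moves at height `h`. -/
noncomputable def Mtop (n A h p : ℤ) : ℕ :=
  Nat.card {mz : List Move // (mz.length : ℤ) = n ∧ IsMotzkin mz ∧ area mz = A ∧
    (maxHeight mz : ℤ) = h ∧ (peaksAt mz h.toNat : ℤ) = p ∧ flatsAt mz h.toNat = 0}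

/-- `D(n,d,h,p)`: the sum of weights of Motzkin paths of width `n`, area `d`,
maximum height `h`, with exactly `p` U-moves ending at height `h` and no H-moves at height `h`. -/
noncomputable def Dtop (n d h p : ℤ) : ℤ :=
  ∑ᶠ mz ∈ {mz : List Move | (mz.length : ℤ) = n ∧ IsMotzkin mz ∧ area mz = d ∧
    (maxHeight mz : ℤ) = h ∧ (peaksAt mz h.toNat : ℤ) = p ∧ flatsAt mz h.toNat = 0}, weight mz

/-- The area under the first `i` moves of a path (trapezoid rule; may be a half-integer). -/
def prefixArea (mz : List Move) (i : ℕ) : ℚ :=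
  ∑ j ∈ Finset.range i, ((heightAt mz j : ℚ) + (heightAt mz (j + 1) : ℚ)) / 2

instance : Fintype Move :=
  ⟨{Move.U, Move.H, Move.D}, by intro m; rcases m <;> simp⟩

namespace GPAux
open Finset

/-- The step performed at index `i` (0 if out of range). -/
def stepAt (mz : List Move) (i : ℕ) : ℤ := ((mz[i]?).map Move.step).getD 0

lemma heightAt_zero (mz : List Move) : heightAt mz 0 = 0 := by
  simp [heightAt]

lemma heightAt_succ (mz : List Move) (i : ℕ) :
    heightAt mz (i + 1) = heightAt mz i + stepAt mz i := by
  unfold heightAt stepAt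
  rw [List.take_succ, List.map_append, List.sum_append]
  cases h : mz[i]? <;> simp [h]

lemma stepAt_eq_of_le (mz : List Move) (i : ℕ) (h : mz.length ≤ i) : stepAt mz i = 0 := by
  simp [stepAt, List.getElem?_eq_none h]

lemma heightAt_eq_sum (mz : List Move) (i : ℕ) :
    heightAt mz i = ∑ j ∈ range i, stepAt mz j := by
  induction i with
  | zero => simp [heightAt_zero]
  | succ i ih => rw [heightAt_succ, ih, Finset.sum_range_succ]

lemma stepAt_split (mz : List Move) (j : ℕ) :
    stepAt mz j = (if mz[j]? = some U then (1:ℤ) else 0) - (if mz[j]? = some D then (1:ℤ) else 0) := by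
  rcases h : mz[j]? with _ | m
  · simp [stepAt, h]
  · cases m <;> simp [stepAt, h, Move.step]

end GPAux
namespace GPAux2
open Finset GPAux

variable {n : ℕ} (π : Equiv.Perm (Fin n))

/-- number of left-to-right crossings of level `i - 1/2`. -/
def cInt (i : ℕ) : ℤ :=
  ∑ j : Fin n, if (j : ℕ) < i ∧ i ≤ (π j : ℕ) then (1:ℤ) else 0

lemma cInt_nonneg (i : ℕ) : 0 ≤ cInt π i := by
  apply Finset.sum_nonneg; intro j _; positivity

lemma cInt_of_ge (i : ℕ) (h : n ≤ i) : cInt π i = 0 := by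
  apply Finset.sum_eq_zero; intro j _
  have : ¬ (i ≤ (π j : ℕ)) := by have := (π j).is_lt; omega
  simp [this]

lemma toPath_length : (toPath π).length = n := by simp [toPath]

lemma toPath_getElem? (i : ℕ) (h : i < n) :
    (toPath π)[i]? = some (
      if (i : ℕ) < (π ⟨i, h⟩ : ℕ) ∧ (i : ℕ) < (π.symm ⟨i, h⟩ : ℕ) then U
      else if (π ⟨i, h⟩ : ℕ) < i ∧ (π.symm ⟨i, h⟩ : ℕ) < i then D
      else H) := by
  have hl : i < (toPath π).length := by rw [toPath_length]; exact h
  rw [List.getElem?_eq_getElem hl]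
  congr 1
  show (List.map _ (List.finRange n))[i]'(by simpa [toPath] using hl) = _
  rw [List.getElem_map, List.getElem_finRange]
  rfl

lemma fix_iff (i : Fin n) : π i = i ↔ π.symm i = i := by
  constructor
  · intro h; conv_lhs => rw [← h]; simp
  · intro h; conv_lhs => rw [← h]; simp

lemma cInt_succ_sub (i : ℕ) (h : i < n) :
    cInt π (i + 1) - cInt π i
      = (if i < (π ⟨i, h⟩ : ℕ) then 1 else 0) - (if (π.symm ⟨i, h⟩ : ℕ) < i then 1 else 0) := by
  set a : Fin n := ⟨i, h⟩ with ha
  rw [cInt, cInt, ← Finset.sum_sub_distrib]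
  have key : ∀ j : Fin n,
      ((if (j : ℕ) < i + 1 ∧ i + 1 ≤ (π j : ℕ) then (1:ℤ) else 0)
        - (if (j : ℕ) < i ∧ i ≤ (π j : ℕ) then (1:ℤ) else 0))
      = (if j = a ∧ i < (π a : ℕ) then (1:ℤ) else 0)
        - (if j = π.symm a ∧ (π.symm a : ℕ) < i then (1:ℤ) else 0) := by
    intro j
    have hja : (j : ℕ) = i ↔ j = a :=
      ⟨fun hh => Fin.ext (by simp [ha, hh]), fun hh => by rw [hh]⟩
    have hjs : (π j : ℕ) = i ↔ j = π.symm a := by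
      constructor
      · intro hh
        have hpa : π j = a := Fin.ext (by simpa [ha] using hh)
        rw [← hpa]; simp
      · intro hh; rw [hh]; simp [ha]
    simp only [← hja, ← hjs]
    by_cases hx : (j : ℕ) = i <;> by_cases hy : (π j : ℕ) = i
    · have l1 : (π j : ℕ) = (π a : ℕ) := by rw [hja.mp hx]
      have l2 : (j : ℕ) = (π.symm a : ℕ) := by rw [hjs.mp hy]
      split_ifs <;> omega
    · have l1 : (π j : ℕ) = (π a : ℕ) := by rw [hja.mp hx]
      split_ifs <;> omega
    · have l2 : (j : ℕ) = (π.symm a : ℕ) := by rw [hjs.mp hy]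
      split_ifs <;> omega
    · split_ifs <;> omega
  rw [Finset.sum_congr rfl (fun j _ => key j), Finset.sum_sub_distrib]
  congr 1
  · by_cases hc : i < (π a : ℕ)
    · simp only [hc, and_true]
      rw [Finset.sum_ite_eq' Finset.univ a (fun _ => (1:ℤ))]
      simp [hc]
    · simp [hc]
  · by_cases hc : (π.symm a : ℕ) < i
    · simp only [hc, and_true]
      rw [Finset.sum_ite_eq' Finset.univ (π.symm a) (fun _ => (1:ℤ))]
      simp [hc]
    · simp [hc]

lemma heightAt_toPath (i : ℕ) : heightAt (toPath π) i = cInt π i := by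
  induction i with
  | zero => rw [heightAt_zero, cInt]; simp
  | succ i ih =>
    rw [heightAt_succ, ih]
    by_cases h : i < n
    · have hstep : stepAt (toPath π) i
          = (if i < (π ⟨i, h⟩ : ℕ) then 1 else 0) - (if (π.symm ⟨i, h⟩ : ℕ) < i then 1 else 0) := by
        rw [stepAt, toPath_getElem? π i h]
        have hfix : (π ⟨i, h⟩ : ℕ) = i ↔ (π.symm ⟨i, h⟩ : ℕ) = i := by
          constructor
          · intro hx; have hx' : π ⟨i, h⟩ = ⟨i, h⟩ := Fin.ext hx
            rw [(fix_iff π _).mp hx']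
          · intro hx; have hx' : π.symm ⟨i, h⟩ = ⟨i, h⟩ := Fin.ext hx
            rw [(fix_iff π _).mpr hx']
        have hlt : (π ⟨i, h⟩ : ℕ) < n := (π ⟨i, h⟩).is_lt
        split_ifs with h1 h2 <;>
          simp only [Option.map_some, Option.getD_some, Move.step] <;> omega
      rw [hstep, ← cInt_succ_sub π i h]; ring
    · rw [stepAt_eq_of_le, cInt_of_ge π i (by omega), cInt_of_ge π (i+1) (by omega)]
      · ring
      · rw [toPath_length]; omega

lemma isMotzkin_toPath : IsMotzkin (toPath π) := by
  constructor
  · intro i; rw [heightAt_toPath]; exact cInt_nonneg π i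
  · rw [heightAt_toPath, toPath_length, cInt_of_ge π n le_rfl]

lemma area_toPath : 2 * area (toPath π) = totalDisp π := by
  have hsum : ∀ j : Fin n,
      (∑ i ∈ range (n+1), if (j : ℕ) < i ∧ i ≤ (π j : ℕ) then (1:ℤ) else 0)
        = (((π j : ℕ) - (j : ℕ) : ℕ) : ℤ) := by
    intro j
    rw [Finset.sum_boole]
    have hfil : (range (n+1)).filter (fun i => (j : ℕ) < i ∧ i ≤ (π j : ℕ))
        = Finset.Ioc (j : ℕ) (π j : ℕ) := by
      ext k
      have := (π j).is_lt
      simp only [Finset.mem_filter, Finset.mem_range, Finset.mem_Ioc]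
      omega
    rw [hfil, Nat.card_Ioc]
  have harea : area (toPath π) = ∑ j : Fin n, (((π j : ℕ) - (j : ℕ) : ℕ) : ℤ) := by
    rw [area, toPath_length]
    calc ∑ i ∈ range (n+1), heightAt (toPath π) i
        = ∑ i ∈ range (n+1), cInt π i := by
          exact Finset.sum_congr rfl fun i _ => heightAt_toPath π i
      _ = ∑ j : Fin n, ∑ i ∈ range (n+1),
            (if (j : ℕ) < i ∧ i ≤ (π j : ℕ) then (1:ℤ) else 0) := Finset.sum_comm
      _ = _ := Finset.sum_congr rfl fun j _ => hsum j
  have hzero : ∑ j : Fin n, (((π j : ℕ) : ℤ) - ((j : ℕ) : ℤ)) = 0 := by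
    rw [Finset.sum_sub_distrib]
    rw [show ∑ j : Fin n, ((π j : ℕ) : ℤ) = ∑ j : Fin n, ((j : ℕ) : ℤ) from
      Equiv.sum_comp π (fun j : Fin n => ((j : ℕ) : ℤ))]
    ring
  rw [harea, totalDisp, Finset.mul_sum]
  have : ∀ j : Fin n, 2 * (((π j : ℕ) - (j : ℕ) : ℕ) : ℤ)
      = |((π j : ℕ) : ℤ) - ((j : ℕ) : ℤ)| + (((π j : ℕ) : ℤ) - ((j : ℕ) : ℤ)) := by
    intro j
    rcases abs_cases (((π j : ℕ) : ℤ) - ((j : ℕ) : ℤ)) with ⟨he, _⟩ | ⟨he, _⟩ <;> rw [he] <;> omega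
  rw [Finset.sum_congr rfl fun j _ => this j, Finset.sum_add_distrib, hzero, add_zero]

end GPAux2
namespace GPAux3
open Finset GPAux GPAux2

/-- position `j` is already matched to a value `≤ j`. -/
def EP (s : Finset (ℕ × ℕ)) (j : ℕ) : Prop := ∃ p ∈ s, p.1 = j ∧ p.2 ≤ j
/-- value `j` is already matched to a position `≤ j`. -/
def EV (s : Finset (ℕ × ℕ)) (j : ℕ) : Prop := ∃ p ∈ s, p.2 = j ∧ p.1 ≤ j

def letterOK (mz : List Move) (s : Finset (ℕ × ℕ)) (j : ℕ) : Prop :=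
  (mz[j]? = some U → ¬ EP s j ∧ ¬ EV s j) ∧
  (mz[j]? = some H → (EP s j ∨ EV s j) ∧ (EP s j → EV s j → (j, j) ∈ s)) ∧
  (mz[j]? = some D → EP s j ∧ EV s j ∧ (j, j) ∉ s)

def Inj (s : Finset (ℕ × ℕ)) : Prop :=
  ∀ p ∈ s, ∀ q ∈ s, (p.1 = q.1 ∨ p.2 = q.2) → p = q

def valid (mz : List Move) (i : ℕ) (s : Finset (ℕ × ℕ)) : Prop :=
  Inj s ∧ (∀ p ∈ s, p.1 < i ∧ p.2 < i) ∧ ∀ j < i, letterOK mz s j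

/-- count of letters `m` among the first `i` moves. -/
def lCt (mz : List Move) (m : Move) (i : ℕ) : ℕ :=
  ((range i).filter fun j => mz[j]? = some m).card

lemma heightAt_eq_lCt (mz : List Move) (i : ℕ) :
    heightAt mz i = (lCt mz U i : ℤ) - (lCt mz D i : ℤ) := by
  rw [heightAt_eq_sum, lCt, lCt, ← Finset.sum_boole, ← Finset.sum_boole,
    ← Finset.sum_sub_distrib]
  exact Finset.sum_congr rfl fun j _ => stepAt_split mz j

lemma lCt_total (mz : List Move) (i : ℕ) (h : i ≤ mz.length) :
    lCt mz U i + lCt mz H i + lCt mz D i = i := by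
  unfold lCt
  rw [Finset.card_filter, Finset.card_filter, Finset.card_filter,
    ← Finset.sum_add_distrib, ← Finset.sum_add_distrib]
  nth_rewrite 2 [show i = ∑ _j ∈ range i, 1 from by simp]
  apply Finset.sum_congr rfl
  intro j hj
  have hjl : j < mz.length := lt_of_lt_of_le (Finset.mem_range.mp hj) h
  rw [List.getElem?_eq_getElem hjl]
  rcases mz[j]'hjl <;> simp

lemma fiber_card (mz : List Move) {i : ℕ} {s : Finset (ℕ × ℕ)} (hv : valid mz i s)
    {j : ℕ} (hj : j < i) (hjl : j < mz.length) :
    (s.filter fun p => max p.1 p.2 = j).card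
      = (if mz[j]? = some D then 2 else if mz[j]? = some H then 1 else 0) := by
  obtain ⟨hinj, hco, hlet⟩ := hv
  obtain ⟨hU, hH, hD⟩ := hlet j hj
  have hsome : mz[j]? = some (mz[j]'hjl) := List.getElem?_eq_getElem hjl
  rcases hm : mz[j]'hjl with _ | _ | _
  · -- U
    rw [hsome, hm] at hU ⊢
    obtain ⟨hnEP, hnEV⟩ := hU rfl
    rw [if_neg (by simp), if_neg (by simp)]
    rw [Finset.card_eq_zero, Finset.eq_empty_iff_forall_notMem]
    rintro p hp
    rw [Finset.mem_filter] at hp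
    obtain ⟨hps, hmax⟩ := hp
    have hc : p.1 ≤ j ∧ p.2 ≤ j ∧ (p.1 = j ∨ p.2 = j) := by omega
    rcases hc.2.2 with h1 | h2
    · exact hnEP ⟨p, hps, h1, hc.2.1⟩
    · exact hnEV ⟨p, hps, h2, hc.1⟩
  · -- H
    rw [hsome, hm] at hH ⊢
    obtain ⟨hor, hfix⟩ := hH rfl
    rw [if_neg (by simp), if_pos rfl, Finset.card_eq_one]
    rcases hor with ⟨p₀, hp₀, h1, h2⟩ | ⟨p₀, hp₀, h1, h2⟩
    · refine ⟨p₀, ?_⟩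
      ext q
      simp only [Finset.mem_filter, Finset.mem_singleton]
      constructor
      · rintro ⟨hqs, hmax⟩
        rcases (by omega : q.1 = j ∨ (q.2 = j ∧ q.1 ≤ j)) with e1 | ⟨e2, e3⟩
        · exact hinj q hqs p₀ hp₀ (Or.inl (by omega))
        · have hjj : (j, j) ∈ s := hfix ⟨p₀, hp₀, h1, h2⟩ ⟨q, hqs, e2, e3⟩
          have hq : q = (j, j) := hinj q hqs (j, j) hjj (Or.inr (by simpa using e2))
          have hp : p₀ = (j, j) := hinj p₀ hp₀ (j, j) hjj (Or.inl (by simpa using h1))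
          rw [hq, hp]
      · rintro rfl
        exact ⟨hp₀, by omega⟩
    · refine ⟨p₀, ?_⟩
      ext q
      simp only [Finset.mem_filter, Finset.mem_singleton]
      constructor
      · rintro ⟨hqs, hmax⟩
        rcases (by omega : q.2 = j ∨ (q.1 = j ∧ q.2 ≤ j)) with e1 | ⟨e2, e3⟩
        · exact hinj q hqs p₀ hp₀ (Or.inr (by omega))
        · have hjj : (j, j) ∈ s := hfix ⟨q, hqs, e2, e3⟩ ⟨p₀, hp₀, h1, h2⟩
          have hq : q = (j, j) := hinj q hqs (j, j) hjj (Or.inl (by simpa using e2))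
          have hp : p₀ = (j, j) := hinj p₀ hp₀ (j, j) hjj (Or.inr (by simpa using h1))
          rw [hq, hp]
      · rintro rfl
        exact ⟨hp₀, by omega⟩
  · -- D
    rw [hsome, hm] at hD ⊢
    rw [if_pos rfl]
    obtain ⟨⟨p₀, hp₀, hp1, hp2⟩, ⟨q₀, hq₀, hq2, hq1⟩, hnf⟩ := hD rfl
    have hne : p₀ ≠ q₀ := by
      intro he
      apply hnf
      have hp2' : p₀.2 = j := by rw [he]; exact hq2
      have : p₀ = (j, j) := Prod.ext hp1 hp2'
      rwa [this] at hp₀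
    have hset : (s.filter fun p => max p.1 p.2 = j) = {p₀, q₀} := by
      ext r
      simp only [Finset.mem_filter, Finset.mem_insert, Finset.mem_singleton]
      constructor
      · rintro ⟨hrs, hmax⟩
        rcases (by omega : r.1 = j ∨ r.2 = j) with e1 | e2
        · exact Or.inl (hinj r hrs p₀ hp₀ (Or.inl (by omega)))
        · exact Or.inr (hinj r hrs q₀ hq₀ (Or.inr (by omega)))
      · rintro (rfl | rfl)
        · exact ⟨hp₀, by omega⟩
        · exact ⟨hq₀, by omega⟩
    rw [hset, Finset.card_insert_of_notMem (by simpa using hne), Finset.card_singleton]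

lemma card_valid (mz : List Move) {i : ℕ} {s : Finset (ℕ × ℕ)} (hv : valid mz i s)
    (hil : i ≤ mz.length) :
    s.card = 2 * lCt mz D i + lCt mz H i := by
  have hmap : ∀ p ∈ s, max p.1 p.2 ∈ range i := by
    intro p hp
    have := hv.2.1 p hp
    rw [Finset.mem_range]
    omega
  rw [Finset.card_eq_sum_card_fiberwise hmap]
  rw [Finset.sum_congr rfl (fun j hj => fiber_card mz hv (mem_range.mp hj)
    (lt_of_lt_of_le (mem_range.mp hj) hil))]
  rw [lCt, lCt, Finset.card_filter, Finset.card_filter, Finset.mul_sum,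
    ← Finset.sum_add_distrib]
  apply Finset.sum_congr rfl
  intro j _
  by_cases hd : mz[j]? = some D
  · have hh : ¬ mz[j]? = some H := by rw [hd]; simp
    simp [hd, hh]
  · by_cases hh : mz[j]? = some H <;> simp [hd, hh]

def freeP (s : Finset (ℕ × ℕ)) (i : ℕ) : Finset ℕ :=
  (range i).filter fun a => ∀ p ∈ s, p.1 ≠ a

def freeV (s : Finset (ℕ × ℕ)) (i : ℕ) : Finset ℕ :=
  (range i).filter fun b => ∀ p ∈ s, p.2 ≠ b

lemma freeP_card (mz : List Move) {i : ℕ} {s : Finset (ℕ × ℕ)} (hv : valid mz i s)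
    (hil : i ≤ mz.length) : ((freeP s i).card : ℤ) = heightAt mz i := by
  have hdomsub : s.image Prod.fst ⊆ range i := by
    intro a ha
    rw [Finset.mem_image] at ha
    obtain ⟨p, hp, rfl⟩ := ha
    exact mem_range.mpr (hv.2.1 p hp).1
  have hdomcard : (s.image Prod.fst).card = s.card :=
    Finset.card_image_of_injOn (fun p hp q hq he => hv.1 p hp q hq (Or.inl he))
  have hfp : freeP s i = range i \ s.image Prod.fst := by
    ext a
    simp only [freeP, Finset.mem_filter, Finset.mem_sdiff, Finset.mem_image, not_exists]
    constructor
    · rintro ⟨h1, h2⟩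
      refine ⟨h1, ?_⟩
      rintro p ⟨hp, hpa⟩
      exact h2 p hp hpa
    · rintro ⟨h1, h2⟩
      exact ⟨h1, fun p hp hpa => h2 p ⟨hp, hpa⟩⟩
  rw [hfp, Finset.card_sdiff_of_subset hdomsub, hdomcard, Finset.card_range]
  have h1 := card_valid mz hv hil
  have h2 := lCt_total mz i hil
  have h3 := heightAt_eq_lCt mz i
  have hle : s.card ≤ i := by
    rw [← hdomcard]
    simpa using Finset.card_le_card hdomsub
  omega

lemma freeV_card (mz : List Move) {i : ℕ} {s : Finset (ℕ × ℕ)} (hv : valid mz i s)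
    (hil : i ≤ mz.length) : ((freeV s i).card : ℤ) = heightAt mz i := by
  have hdomsub : s.image Prod.snd ⊆ range i := by
    intro a ha
    rw [Finset.mem_image] at ha
    obtain ⟨p, hp, rfl⟩ := ha
    exact mem_range.mpr (hv.2.1 p hp).2
  have hdomcard : (s.image Prod.snd).card = s.card :=
    Finset.card_image_of_injOn (fun p hp q hq he => hv.1 p hp q hq (Or.inr he))
  have hfp : freeV s i = range i \ s.image Prod.snd := by
    ext a
    simp only [freeV, Finset.mem_filter, Finset.mem_sdiff, Finset.mem_image, not_exists]
    constructor
    · rintro ⟨h1, h2⟩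
      refine ⟨h1, ?_⟩
      rintro p ⟨hp, hpa⟩
      exact h2 p hp hpa
    · rintro ⟨h1, h2⟩
      exact ⟨h1, fun p hp hpa => h2 p ⟨hp, hpa⟩⟩
  rw [hfp, Finset.card_sdiff_of_subset hdomsub, hdomcard, Finset.card_range]
  have h1 := card_valid mz hv hil
  have h2 := lCt_total mz i hil
  have h3 := heightAt_eq_lCt mz i
  have hle : s.card ≤ i := by
    rw [← hdomcard]
    simpa using Finset.card_le_card hdomsub
  omega

end GPAux3
namespace GPAux4
open Finset GPAux GPAux2 GPAux3

open scoped Classical in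
noncomputable def Tset (mz : List Move) (i : ℕ) : Finset (Finset (ℕ × ℕ)) :=
  (range mz.length ×ˢ range mz.length).powerset.filter fun s => valid mz i s

def par (i : ℕ) (s' : Finset (ℕ × ℕ)) : Finset (ℕ × ℕ) :=
  s'.filter fun p => p.1 ≠ i ∧ p.2 ≠ i

def cc (mz : List Move) (i : ℕ) : ℕ :=
  if mz[i]? = some D then (heightAt mz i).toNat ^ 2
  else if mz[i]? = some H then 2 * (heightAt mz i).toNat + 1
  else 1

lemma mem_Tset {mz : List Move} {i : ℕ} {s : Finset (ℕ × ℕ)} :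
    s ∈ Tset mz i ↔ s ⊆ range mz.length ×ˢ range mz.length ∧ valid mz i s := by
  classical
  simp [Tset, Finset.mem_filter, Finset.mem_powerset]

lemma par_eq_self {i : ℕ} {s : Finset (ℕ × ℕ)} (hco : ∀ p ∈ s, p.1 < i ∧ p.2 < i) :
    par i s = s := by
  apply Finset.filter_true_of_mem
  intro p hp
  have := hco p hp
  omega

lemma par_subset {i : ℕ} {s' : Finset (ℕ × ℕ)} : par i s' ⊆ s' := Finset.filter_subset _ _

lemma EP_insert_high {i : ℕ} {s : Finset (ℕ × ℕ)} {p₀ : ℕ × ℕ}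
    (h : p₀.1 = i ∨ p₀.2 = i) {j : ℕ} (hj : j < i) : EP (insert p₀ s) j ↔ EP s j := by
  constructor
  · rintro ⟨p, hp, h1, h2⟩
    rcases Finset.mem_insert.mp hp with rfl | hp
    · omega
    · exact ⟨p, hp, h1, h2⟩
  · rintro ⟨p, hp, h1, h2⟩
    exact ⟨p, Finset.mem_insert_of_mem hp, h1, h2⟩

lemma EV_insert_high {i : ℕ} {s : Finset (ℕ × ℕ)} {p₀ : ℕ × ℕ}
    (h : p₀.1 = i ∨ p₀.2 = i) {j : ℕ} (hj : j < i) : EV (insert p₀ s) j ↔ EV s j := by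
  constructor
  · rintro ⟨p, hp, h1, h2⟩
    rcases Finset.mem_insert.mp hp with rfl | hp
    · omega
    · exact ⟨p, hp, h1, h2⟩
  · rintro ⟨p, hp, h1, h2⟩
    exact ⟨p, Finset.mem_insert_of_mem hp, h1, h2⟩

lemma letterOK_insert_high {mz : List Move} {i : ℕ} {s : Finset (ℕ × ℕ)} {p₀ : ℕ × ℕ}
    (h : p₀.1 = i ∨ p₀.2 = i) {j : ℕ} (hj : j < i) :
    letterOK mz (insert p₀ s) j ↔ letterOK mz s j := by
  have hmem : ((j, j) ∈ insert p₀ s) ↔ (j, j) ∈ s := by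
    constructor
    · intro hp
      rcases Finset.mem_insert.mp hp with he | hp
      · exfalso
        have h1 : p₀.1 = j := by rw [← he]
        have h2 : p₀.2 = j := by rw [← he]
        omega
      · exact hp
    · exact Finset.mem_insert_of_mem
  unfold letterOK
  rw [EP_insert_high h hj, EV_insert_high h hj, hmem]

lemma Inj_insert {s : Finset (ℕ × ℕ)} (hinj : Inj s) {p₀ : ℕ × ℕ}
    (h1 : ∀ p ∈ s, p.1 ≠ p₀.1) (h2 : ∀ p ∈ s, p.2 ≠ p₀.2) : Inj (insert p₀ s) := by
  intro p hp q hq hor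
  rcases Finset.mem_insert.mp hp with hp0 | hps <;> rcases Finset.mem_insert.mp hq with hq0 | hqs
  · rw [hp0, hq0]
  · exfalso
    rcases hor with h | h
    · exact h1 q hqs (by rw [← h, hp0])
    · exact h2 q hqs (by rw [← h, hp0])
  · exfalso
    rcases hor with h | h
    · exact h1 p hps (by rw [h, hq0])
    · exact h2 p hps (by rw [h, hq0])
  · exact hinj p hps q hqs hor

/-- if `s'` is valid at stage `i+1` then its parent is valid at stage `i`. -/
lemma par_valid {mz : List Move} {i : ℕ} {s' : Finset (ℕ × ℕ)}
    (hv : valid mz (i + 1) s') : valid mz i (par i s') := by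
  obtain ⟨hinj, hco, hlet⟩ := hv
  refine ⟨fun p hp q hq hor => hinj p (par_subset hp) q (par_subset hq) hor, ?_, ?_⟩
  · intro p hp
    rw [par, Finset.mem_filter] at hp
    have := hco p hp.1
    have := hp.2
    omega
  · intro j hj
    have hEP : EP (par i s') j ↔ EP s' j := by
      constructor
      · rintro ⟨p, hp, h1, h2⟩
        exact ⟨p, par_subset hp, h1, h2⟩
      · rintro ⟨p, hp, h1, h2⟩
        refine ⟨p, ?_, h1, h2⟩
        rw [par, Finset.mem_filter]
        exact ⟨hp, by omega, by omega⟩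
    have hEV : EV (par i s') j ↔ EV s' j := by
      constructor
      · rintro ⟨p, hp, h1, h2⟩
        exact ⟨p, par_subset hp, h1, h2⟩
      · rintro ⟨p, hp, h1, h2⟩
        refine ⟨p, ?_, h1, h2⟩
        rw [par, Finset.mem_filter]
        exact ⟨hp, by omega, by omega⟩
    have hmem : ((j, j) ∈ par i s') ↔ (j, j) ∈ s' := by
      constructor
      · exact fun hp => par_subset hp
      · intro hp
        rw [par, Finset.mem_filter]
        exact ⟨hp, by omega, by omega⟩
    have := hlet j (by omega)
    unfold letterOK at this ⊢
    rw [hEP, hEV, hmem]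
    exact this

lemma par_mem_Tset {mz : List Move} {i : ℕ} {s' : Finset (ℕ × ℕ)}
    (hv : s' ∈ Tset mz (i + 1)) : par i s' ∈ Tset mz i := by
  rw [mem_Tset] at hv ⊢
  exact ⟨fun p hp => hv.1 (par_subset hp), par_valid hv.2⟩

end GPAux4
namespace GPAux5
open Finset GPAux GPAux2 GPAux3 GPAux4

variable {mz : List Move} {i : ℕ} {s : Finset (ℕ × ℕ)}

lemma fiber_eq_U (hm : mz[i]? = some U) (hs : s ∈ Tset mz i) :
    (Tset mz (i + 1)).filter (fun s' => par i s' = s) = {s} := by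
  rw [mem_Tset] at hs
  obtain ⟨hss, hinj, hco, hlet⟩ := hs
  ext s'
  simp only [Finset.mem_filter, Finset.mem_singleton]
  constructor
  · rintro ⟨hs', hpar⟩
    rw [mem_Tset] at hs'
    obtain ⟨hss', hinj', hco', hlet'⟩ := hs'
    obtain ⟨hnEP, hnEV⟩ := (hlet' i (by omega)).1 hm
    apply Finset.Subset.antisymm
    · intro p hp
      by_cases h1 : p.1 = i
      · exact absurd ⟨p, hp, h1, by have := (hco' p hp).2; omega⟩ hnEP
      · by_cases h2 : p.2 = i
        · exact absurd ⟨p, hp, h2, by have := (hco' p hp).1; omega⟩ hnEV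
        · rw [← hpar, par, Finset.mem_filter]
          exact ⟨hp, h1, h2⟩
    · rw [← hpar]
      exact par_subset
  · rintro rfl
    refine ⟨?_, par_eq_self hco⟩
    rw [mem_Tset]
    refine ⟨hss, hinj, fun p hp => by have := hco p hp; omega, ?_⟩
    intro j hj
    rcases Nat.lt_succ_iff_lt_or_eq.mp hj with h | rfl
    · exact hlet j h
    · refine ⟨fun _ => ⟨?_, ?_⟩, fun h => ?_, fun h => ?_⟩
      · rintro ⟨p, hp, h1, _⟩
        have := (hco p hp).1
        omega
      · rintro ⟨p, hp, h1, _⟩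
        have := (hco p hp).2
        omega
      · rw [hm] at h; simp at h
      · rw [hm] at h; simp at h

lemma fiber_eq_H (hil : i < mz.length) (hm : mz[i]? = some H) (hs : s ∈ Tset mz i) :
    (Tset mz (i + 1)).filter (fun s' => par i s' = s)
      = insert (insert (i, i) s)
          (((freeV s i).image fun b => insert (i, b) s)
            ∪ ((freeP s i).image fun a => insert (a, i) s)) := by
  rw [mem_Tset] at hs
  obtain ⟨hss, hinj, hco, hlet⟩ := hs
  have hfresh1 : ∀ p ∈ s, p.1 ≠ i := fun p hp => by have := (hco p hp).1; omega
  have hfresh2 : ∀ p ∈ s, p.2 ≠ i := fun p hp => by have := (hco p hp).2; omega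
  have hvalid : ∀ p₀ : ℕ × ℕ, (p₀.1 = i ∨ p₀.2 = i) → p₀.1 ≤ i → p₀.2 ≤ i →
      (∀ p ∈ s, p.1 ≠ p₀.1) → (∀ p ∈ s, p.2 ≠ p₀.2) →
      letterOK mz (insert p₀ s) i →
      insert p₀ s ∈ Tset mz (i + 1) ∧ par i (insert p₀ s) = s := by
    intro p₀ hor hle1 hle2 hf1 hf2 hlettop
    constructor
    · rw [mem_Tset]
      refine ⟨?_, Inj_insert hinj hf1 hf2, ?_, ?_⟩
      · intro p hp
        rcases Finset.mem_insert.mp hp with rfl | hp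
        · rw [Finset.mem_product, Finset.mem_range, Finset.mem_range]
          omega
        · exact hss hp
      · intro p hp
        rcases Finset.mem_insert.mp hp with rfl | hp
        · omega
        · have := hco p hp; omega
      · intro j hj
        rcases Nat.lt_succ_iff_lt_or_eq.mp hj with h | rfl
        · rw [letterOK_insert_high hor h]
          exact hlet j h
        · exact hlettop
    · rw [par, Finset.filter_insert, if_neg (by omega)]
      exact par_eq_self hco
  ext s'
  simp only [Finset.mem_filter, Finset.mem_insert, Finset.mem_union, Finset.mem_image]
  constructor
  · rintro ⟨hs', hpar⟩
    rw [mem_Tset] at hs'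
    obtain ⟨hss', hinj', hco', hlet'⟩ := hs'
    obtain ⟨hor, hfix⟩ := (hlet' i (by omega)).2.1 hm
    have hsub : s ⊆ s' := by
      rw [← hpar]; exact par_subset
    by_cases hfx : (i, i) ∈ s'
    · left
      apply Finset.Subset.antisymm
      · intro p hp
        by_cases h1 : p.1 = i
        · have hpe : p = (i, i) := hinj' p hp (i, i) hfx (Or.inl (by simpa using h1))
          rw [hpe]
          exact Finset.mem_insert_self _ _
        · by_cases h2 : p.2 = i
          · have hpe : p = (i, i) := hinj' p hp (i, i) hfx (Or.inr (by simpa using h2))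
            rw [hpe]
            exact Finset.mem_insert_self _ _
          · refine Finset.mem_insert_of_mem ?_
            rw [← hpar, par, Finset.mem_filter]
            exact ⟨hp, h1, h2⟩
      · intro p hp
        rcases Finset.mem_insert.mp hp with rfl | hp
        · exact hfx
        · exact hsub hp
    · right
      have hnot : ¬ (EP s' i ∧ EV s' i) := fun hand => hfx (hfix hand.1 hand.2)
      have hset : ∀ p₀ ∈ s', p₀.1 = i ∨ p₀.2 = i → s' = insert p₀ s := by
        intro p₀ hp₀ hor₀
        apply Finset.Subset.antisymm
        · intro q hq
          by_cases h1 : q.1 = i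
          · rcases hor₀ with he | he
            · have : q = p₀ := hinj' q hq p₀ hp₀ (Or.inl (by omega))
              rw [this]; exact Finset.mem_insert_self _ _
            · exfalso
              apply hnot
              refine ⟨⟨q, hq, h1, by have := (hco' q hq).2; omega⟩,
                ⟨p₀, hp₀, he, by have := (hco' p₀ hp₀).1; omega⟩⟩
          · by_cases h2 : q.2 = i
            · rcases hor₀ with he | he
              · exfalso
                apply hnot
                refine ⟨⟨p₀, hp₀, he, by have := (hco' p₀ hp₀).2; omega⟩,
                  ⟨q, hq, h2, by have := (hco' q hq).1; omega⟩⟩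
              · have : q = p₀ := hinj' q hq p₀ hp₀ (Or.inr (by omega))
                rw [this]; exact Finset.mem_insert_self _ _
            · refine Finset.mem_insert_of_mem ?_
              rw [← hpar, par, Finset.mem_filter]
              exact ⟨hq, h1, h2⟩
        · intro q hq
          rcases Finset.mem_insert.mp hq with rfl | hq
          · exact hp₀
          · exact hsub hq
      rcases hor with hEP | hEV
      · left
        obtain ⟨p₀, hp₀, h1, h2⟩ := hEP
        have hne : p₀.2 ≠ i := by
          intro he
          exact hfx (by rw [← (Prod.ext h1 he : p₀ = (i, i))]; exact hp₀)
        refine ⟨p₀.2, ?_, ?_⟩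
        · rw [freeV, Finset.mem_filter, Finset.mem_range]
          refine ⟨by omega, ?_⟩
          intro p hp hpe
          have hq : p = p₀ := hinj' p (hsub hp) p₀ hp₀ (Or.inr hpe)
          exact hfresh1 p hp (by rw [hq]; exact h1)
        · rw [show ((i, p₀.2) : ℕ × ℕ) = p₀ from Prod.ext h1.symm rfl]
          exact (hset p₀ hp₀ (Or.inl h1)).symm
      · right
        obtain ⟨p₀, hp₀, h1, h2⟩ := hEV
        have hne : p₀.1 ≠ i := by
          intro he
          exact hfx (by rw [← (Prod.ext he h1 : p₀ = (i, i))]; exact hp₀)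
        refine ⟨p₀.1, ?_, ?_⟩
        · rw [freeP, Finset.mem_filter, Finset.mem_range]
          refine ⟨by omega, ?_⟩
          intro p hp hpe
          have hq : p = p₀ := hinj' p (hsub hp) p₀ hp₀ (Or.inl hpe)
          exact hfresh2 p hp (by rw [hq]; exact h1)
        · rw [show ((p₀.1, i) : ℕ × ℕ) = p₀ from Prod.ext rfl h1.symm]
          exact (hset p₀ hp₀ (Or.inr h1)).symm
  · rintro (rfl | ⟨b, hb, rfl⟩ | ⟨a, ha, rfl⟩)
    · refine hvalid (i, i) (Or.inl rfl) le_rfl le_rfl hfresh1 hfresh2 ?_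
      refine ⟨fun h => ?_, fun _ => ?_, fun h => ?_⟩
      · rw [hm] at h; simp at h
      · exact ⟨Or.inl ⟨(i, i), Finset.mem_insert_self _ _, rfl, le_rfl⟩,
          fun _ _ => Finset.mem_insert_self _ _⟩
      · rw [hm] at h; simp at h
    · rw [freeV, Finset.mem_filter, Finset.mem_range] at hb
      refine hvalid (i, b) (Or.inl rfl) le_rfl (by omega) hfresh1 (fun p hp => hb.2 p hp) ?_
      refine ⟨fun h => ?_, fun _ => ?_, fun h => ?_⟩
      · rw [hm] at h; simp at h
      · refine ⟨Or.inl ⟨(i, b), Finset.mem_insert_self _ _, rfl, by omega⟩, fun _ hEV => ?_⟩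
        exfalso
        obtain ⟨q, hq, hq2, hq1⟩ := hEV
        rcases Finset.mem_insert.mp hq with rfl | hq
        · simp at hq2; omega
        · exact hfresh2 q hq hq2
      · rw [hm] at h; simp at h
    · rw [freeP, Finset.mem_filter, Finset.mem_range] at ha
      refine hvalid (a, i) (Or.inr rfl) (by omega) le_rfl (fun p hp => ha.2 p hp) hfresh2 ?_
      refine ⟨fun h => ?_, fun _ => ?_, fun h => ?_⟩
      · rw [hm] at h; simp at h
      · refine ⟨Or.inr ⟨(a, i), Finset.mem_insert_self _ _, rfl, by omega⟩, fun hEP _ => ?_⟩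
        exfalso
        obtain ⟨q, hq, hq1, hq2⟩ := hEP
        rcases Finset.mem_insert.mp hq with rfl | hq
        · simp at hq1; omega
        · exact hfresh1 q hq hq1
      · rw [hm] at h; simp at h

end GPAux5
namespace GPAux6
open Finset GPAux GPAux2 GPAux3 GPAux4 GPAux5

variable {mz : List Move} {i : ℕ} {s : Finset (ℕ × ℕ)}

lemma fiber_eq_D (hil : i < mz.length) (hm : mz[i]? = some D) (hs : s ∈ Tset mz i) :
    (Tset mz (i + 1)).filter (fun s' => par i s' = s)
      = ((freeP s i) ×ˢ (freeV s i)).image fun ab => insert (i, ab.2) (insert (ab.1, i) s) := by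
  rw [mem_Tset] at hs
  obtain ⟨hss, hinj, hco, hlet⟩ := hs
  have hfresh1 : ∀ p ∈ s, p.1 ≠ i := fun p hp => by have := (hco p hp).1; omega
  have hfresh2 : ∀ p ∈ s, p.2 ≠ i := fun p hp => by have := (hco p hp).2; omega
  ext s'
  simp only [Finset.mem_filter, Finset.mem_image, Finset.mem_product]
  constructor
  · rintro ⟨hs', hpar⟩
    rw [mem_Tset] at hs'
    obtain ⟨hss', hinj', hco', hlet'⟩ := hs'
    obtain ⟨hEP, hEV, hnf⟩ := (hlet' i (by omega)).2.2 hm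
    obtain ⟨p₀, hp₀, hp1, hp2⟩ := hEP
    obtain ⟨q₀, hq₀, hq2, hq1⟩ := hEV
    have hsub : s ⊆ s' := by rw [← hpar]; exact par_subset
    have hpne : p₀.2 ≠ i := by
      intro he
      exact hnf (by rw [← (Prod.ext hp1 he : p₀ = (i, i))]; exact hp₀)
    have hqne : q₀.1 ≠ i := by
      intro he
      exact hnf (by rw [← (Prod.ext he hq2 : q₀ = (i, i))]; exact hq₀)
    refine ⟨(q₀.1, p₀.2), ⟨?_, ?_⟩, ?_⟩
    · rw [freeP, Finset.mem_filter, Finset.mem_range]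
      refine ⟨by omega, ?_⟩
      intro p hp hpe
      have he : p = q₀ := hinj' p (hsub hp) q₀ hq₀ (Or.inl hpe)
      exact hfresh2 p hp (by rw [he]; exact hq2)
    · rw [freeV, Finset.mem_filter, Finset.mem_range]
      refine ⟨by omega, ?_⟩
      intro p hp hpe
      have he : p = p₀ := hinj' p (hsub hp) p₀ hp₀ (Or.inr hpe)
      exact hfresh1 p hp (by rw [he]; exact hp1)
    · rw [show ((i, p₀.2) : ℕ × ℕ) = p₀ from Prod.ext hp1.symm rfl,
        show ((q₀.1, i) : ℕ × ℕ) = q₀ from Prod.ext rfl hq2.symm]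
      apply Finset.Subset.antisymm
      · intro r hr
        rcases Finset.mem_insert.mp hr with rfl | hr
        · exact hp₀
        rcases Finset.mem_insert.mp hr with rfl | hr
        · exact hq₀
        · exact hsub hr
      · intro r hr
        by_cases h1 : r.1 = i
        · have : r = p₀ := hinj' r hr p₀ hp₀ (Or.inl (by omega))
          rw [this]; exact Finset.mem_insert_self _ _
        · by_cases h2 : r.2 = i
          · have : r = q₀ := hinj' r hr q₀ hq₀ (Or.inr (by omega))
            rw [this]
            exact Finset.mem_insert_of_mem (Finset.mem_insert_self _ _)
          · refine Finset.mem_insert_of_mem (Finset.mem_insert_of_mem ?_)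
            rw [← hpar, par, Finset.mem_filter]
            exact ⟨hr, h1, h2⟩
      -- note the goal was s' = insert p₀ (insert q₀ s); antisymm order
  · rintro ⟨⟨a, b⟩, ⟨ha, hb⟩, rfl⟩
    rw [freeP, Finset.mem_filter, Finset.mem_range] at ha
    rw [freeV, Finset.mem_filter, Finset.mem_range] at hb
    have hinj2 : Inj (insert (a, i) s) :=
      Inj_insert hinj (fun p hp => ha.2 p hp) (fun p hp => hfresh2 p hp)
    have hinj3 : Inj (insert (i, b) (insert (a, i) s)) := by
      apply Inj_insert hinj2
      · intro p hp
        rcases Finset.mem_insert.mp hp with rfl | hp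
        · simp; omega
        · exact hfresh1 p hp
      · intro p hp
        rcases Finset.mem_insert.mp hp with rfl | hp
        · simp; omega
        · intro he; exact hb.2 p hp he
    constructor
    · rw [mem_Tset]
      refine ⟨?_, hinj3, ?_, ?_⟩
      · intro p hp
        rcases Finset.mem_insert.mp hp with rfl | hp
        · rw [Finset.mem_product, Finset.mem_range, Finset.mem_range]; omega
        rcases Finset.mem_insert.mp hp with rfl | hp
        · rw [Finset.mem_product, Finset.mem_range, Finset.mem_range]; omega
        · exact hss hp
      · intro p hp
        rcases Finset.mem_insert.mp hp with rfl | hp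
        · omega
        rcases Finset.mem_insert.mp hp with rfl | hp
        · omega
        · have := hco p hp; omega
      · intro j hj
        rcases Nat.lt_succ_iff_lt_or_eq.mp hj with h | he
        · rw [letterOK_insert_high (Or.inl rfl) h, letterOK_insert_high (Or.inr rfl) h]
          exact hlet j h
        · rw [he]
          refine ⟨fun h => ?_, fun h => ?_, fun _ => ⟨?_, ?_, ?_⟩⟩
          · rw [hm] at h; simp at h
          · rw [hm] at h; simp at h
          · exact ⟨(i, b), Finset.mem_insert_self _ _, rfl, by omega⟩
          · exact ⟨(a, i), Finset.mem_insert_of_mem (Finset.mem_insert_self _ _), rfl, by omega⟩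
          · intro hmemii
            rcases Finset.mem_insert.mp hmemii with he | hmemii
            · have : b = i := by rw [Prod.ext_iff] at he; exact he.2.symm
              omega
            rcases Finset.mem_insert.mp hmemii with he | hmemii
            · have : a = i := by rw [Prod.ext_iff] at he; exact he.1.symm
              omega
            · exact hfresh1 _ hmemii rfl
    · rw [par, Finset.filter_insert, if_neg (by omega), Finset.filter_insert,
        if_neg (by omega)]
      exact par_eq_self hco

lemma card_fiber (hil : i < mz.length) (hs : s ∈ Tset mz i) :
    ((Tset mz (i + 1)).filter (fun s' => par i s' = s)).card = cc mz i := by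
  have hvs : valid mz i s := (mem_Tset.mp hs).2
  have hfp := freeP_card mz hvs (le_of_lt hil)
  have hfv := freeV_card mz hvs (le_of_lt hil)
  have hm : mz[i]? = some (mz[i]'hil) := List.getElem?_eq_getElem hil
  have hco := hvs.2.1
  rcases hmm : mz[i]'hil with _ | _ | _
  · -- U
    have hmU : mz[i]? = some U := by rw [hm, hmm]
    rw [fiber_eq_U hmU hs, Finset.card_singleton, cc, if_neg (by rw [hmU]; simp),
      if_neg (by rw [hmU]; simp)]
  · -- H
    have hmH : mz[i]? = some H := by rw [hm, hmm]
    rw [fiber_eq_H hil hmH hs]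
    have hA : ((freeV s i).image fun b => insert (i, b) s).card = (freeV s i).card := by
      apply Finset.card_image_of_injOn
      intro b hb b' hb' he
      simp only [freeV, Finset.coe_filter, Set.mem_setOf_eq, Finset.mem_range] at hb hb'
      have : (i, b) ∈ insert (i, b') s := by
        rw [← show insert (i, b) s = insert (i, b') s from he]
        exact Finset.mem_insert_self _ _
      rcases Finset.mem_insert.mp this with h | h
      · rw [Prod.ext_iff] at h; exact h.2
      · exact absurd rfl (hb.2 _ h)
    have hB : ((freeP s i).image fun a => insert (a, i) s).card = (freeP s i).card := by
      apply Finset.card_image_of_injOn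
      intro a ha a' ha' he
      simp only [freeP, Finset.coe_filter, Set.mem_setOf_eq, Finset.mem_range] at ha ha'
      have : (a, i) ∈ insert (a', i) s := by
        rw [← show insert (a, i) s = insert (a', i) s from he]
        exact Finset.mem_insert_self _ _
      rcases Finset.mem_insert.mp this with h | h
      · rw [Prod.ext_iff] at h; exact h.1
      · exact absurd (hvs.2.1 _ h).2 (lt_irrefl i)
    rw [Finset.card_insert_of_notMem, Finset.card_union_of_disjoint, hA, hB]
    · rw [cc, if_neg (by rw [hmH]; simp), if_pos hmH]
      omega
    · rw [Finset.disjoint_left]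
      rintro t htA htB
      rw [Finset.mem_image] at htA htB
      obtain ⟨b, hb, rfl⟩ := htA
      obtain ⟨a, ha, he⟩ := htB
      rw [freeV, Finset.mem_filter, Finset.mem_range] at hb
      rw [freeP, Finset.mem_filter, Finset.mem_range] at ha
      have hmem : (a, i) ∈ insert (i, b) s := by
        rw [← he]; exact Finset.mem_insert_self _ _
      rcases Finset.mem_insert.mp hmem with he2 | hmem
      · rw [Prod.ext_iff] at he2
        simp at he2
        omega
      · exact absurd (hvs.2.1 _ hmem).2 (lt_irrefl i)
    · intro hmem
      rcases Finset.mem_union.mp hmem with hA' | hB'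
      · rw [Finset.mem_image] at hA'
        obtain ⟨b, hb, he⟩ := hA'
        rw [freeV, Finset.mem_filter, Finset.mem_range] at hb
        have hmem2 : (i, i) ∈ insert (i, b) s := by
          rw [he]; exact Finset.mem_insert_self _ _
        rcases Finset.mem_insert.mp hmem2 with he2 | hmem2
        · rw [Prod.ext_iff] at he2
          simp at he2
          omega
        · exact absurd (hvs.2.1 _ hmem2).2 (lt_irrefl i)
      · rw [Finset.mem_image] at hB'
        obtain ⟨a, ha, he⟩ := hB'
        rw [freeP, Finset.mem_filter, Finset.mem_range] at ha
        have hmem2 : (i, i) ∈ insert (a, i) s := by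
          rw [he]; exact Finset.mem_insert_self _ _
        rcases Finset.mem_insert.mp hmem2 with he2 | hmem2
        · rw [Prod.ext_iff] at he2
          simp at he2
          omega
        · exact absurd (hvs.2.1 _ hmem2).2 (lt_irrefl i)
  · -- D
    have hmD : mz[i]? = some D := by rw [hm, hmm]
    rw [fiber_eq_D hil hmD hs, Finset.card_image_of_injOn, Finset.card_product]
    · rw [cc, if_pos hmD, pow_two]
      have e1 : (freeP s i).card = (heightAt mz i).toNat := by omega
      have e2 : (freeV s i).card = (heightAt mz i).toNat := by omega
      rw [e1, e2]
    · intro ab hab a'b' hab' he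
      simp only [Finset.mem_coe, Finset.mem_product, freeP, freeV, Finset.mem_filter,
        Finset.mem_range] at hab hab'
      have he' : insert (i, ab.2) (insert (ab.1, i) s)
          = insert (i, a'b'.2) (insert (a'b'.1, i) s) := he
      have h1 : (i, ab.2) ∈ insert (i, a'b'.2) (insert (a'b'.1, i) s) := by
        rw [← he']; exact Finset.mem_insert_self _ _
      have h2 : (ab.1, i) ∈ insert (i, a'b'.2) (insert (a'b'.1, i) s) := by
        rw [← he']; exact Finset.mem_insert_of_mem (Finset.mem_insert_self _ _)
      have e2 : ab.2 = a'b'.2 := by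
        rcases Finset.mem_insert.mp h1 with he2 | h1'
        · rw [Prod.ext_iff] at he2
          exact he2.2
        rcases Finset.mem_insert.mp h1' with he2 | h1''
        · rw [Prod.ext_iff] at he2
          exfalso
          omega
        · exact absurd (hvs.2.1 _ h1'').1 (lt_irrefl i)
      have e1 : ab.1 = a'b'.1 := by
        rcases Finset.mem_insert.mp h2 with he2 | h2'
        · rw [Prod.ext_iff] at he2
          exfalso
          omega
        rcases Finset.mem_insert.mp h2' with he2 | h2''
        · rw [Prod.ext_iff] at he2
          exact he2.1
        · exact absurd (hvs.2.1 _ h2'').2 (lt_irrefl i)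
      exact Prod.ext e1 e2

end GPAux6
namespace GPAux7
open Finset GPAux GPAux3 GPAux4 GPAux5 GPAux6

lemma Tset_zero (mz : List Move) : Tset mz 0 = {∅} := by
  ext s
  rw [mem_Tset, Finset.mem_singleton]
  constructor
  · rintro ⟨_, _, hco, _⟩
    rw [Finset.eq_empty_iff_forall_notMem]
    intro p hp
    have := hco p hp
    omega
  · rintro rfl
    refine ⟨Finset.empty_subset _, fun p hp => absurd hp (Finset.notMem_empty p),
      fun p hp => absurd hp (Finset.notMem_empty p), fun j hj => absurd hj (Nat.not_lt_zero j)⟩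

lemma Tset_card (mz : List Move) : ∀ i, i ≤ mz.length →
    (Tset mz i).card = ∏ j ∈ range i, cc mz j := by
  intro i
  induction i with
  | zero => intro _; rw [Tset_zero]; simp
  | succ i ih =>
    intro h
    have hil : i < mz.length := h
    rw [Finset.card_eq_sum_card_fiberwise (f := par i) (t := Tset mz i)
      (fun s' hs' => par_mem_Tset hs')]
    rw [Finset.sum_congr rfl (fun s hsmem => card_fiber hil hsmem), Finset.sum_const,
      ih (le_of_lt hil), Finset.prod_range_succ, smul_eq_mul, mul_comm]

def Pu (t : List Move) (h : ℕ) : ℤ :=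
  ∏ i ∈ range t.length, (if t[i]? = some U then ((h:ℤ) + heightAt t (i+1)) else 1)

def Pd (t : List Move) (h : ℕ) : ℤ :=
  ∏ i ∈ range t.length, (if t[i]? = some D then ((h:ℤ) + heightAt t i) else 1)

lemma heightAt_cons (m : Move) (t : List Move) (i : ℕ) :
    heightAt (m :: t) (i+1) = Move.step m + heightAt t i := by
  unfold heightAt
  rw [List.take_succ_cons]
  simp

lemma Pu_Pd : ∀ (t : List Move) (h : ℕ),
    (∀ i, i ≤ t.length → 0 ≤ (h:ℤ) + heightAt t i) →
    ((h:ℤ) + heightAt t t.length = 0) →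
    Pd t h = (h.factorial : ℤ) * Pu t h := by
  intro t
  induction t with
  | nil =>
    intro h _ hend
    have h0 : heightAt [] 0 = 0 := heightAt_zero []
    have : h = 0 := by
      rw [show ([] : List Move).length = 0 from rfl, h0] at hend
      omega
    subst this
    simp [Pu, Pd]
  | cons m t ih =>
    intro h hyp hend
    have hlen : (m :: t).length = t.length + 1 := rfl
    have hc0 : heightAt (m :: t) 0 = 0 := heightAt_zero _
    have htr : ∀ h' : ℕ, ((h':ℤ) = (h:ℤ) + Move.step m) →
        Pd t h' = (h'.factorial : ℤ) * Pu t h' := by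
      intro h' he
      apply ih
      · intro i hi
        have := hyp (i+1) (by rw [hlen]; omega)
        rw [heightAt_cons] at this
        omega
      · have := hend
        rw [hlen, heightAt_cons] at this
        omega
    have hPd : ∀ h' : ℕ, ((h':ℤ) = (h:ℤ) + Move.step m) →
        (∏ i ∈ range t.length,
          (if (m::t)[i+1]? = some D then ((h:ℤ) + heightAt (m::t) (i+1)) else 1)) = Pd t h' := by
      intro h' he
      apply Finset.prod_congr rfl
      intro i _
      rw [List.getElem?_cons_succ, heightAt_cons]
      by_cases hcond : t[i]? = some D
      · rw [if_pos hcond, if_pos hcond]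
        omega
      · rw [if_neg hcond, if_neg hcond]
    have hPu : ∀ h' : ℕ, ((h':ℤ) = (h:ℤ) + Move.step m) →
        (∏ i ∈ range t.length,
          (if (m::t)[i+1]? = some U then ((h:ℤ) + heightAt (m::t) (i+1+1)) else 1)) = Pu t h' := by
      intro h' he
      apply Finset.prod_congr rfl
      intro i _
      rw [List.getElem?_cons_succ, heightAt_cons]
      by_cases hcond : t[i]? = some U
      · rw [if_pos hcond, if_pos hcond]
        omega
      · rw [if_neg hcond, if_neg hcond]
    rw [Pu, Pd, hlen, Finset.prod_range_succ', Finset.prod_range_succ']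
    rcases m with _ | _ | _
    · -- m = U
      rw [hPd (h+1) (by simp [Move.step]), hPu (h+1) (by simp [Move.step]),
        htr (h+1) (by simp [Move.step])]
      rw [List.getElem?_cons_zero]
      rw [if_neg (by simp), if_pos rfl, heightAt_cons, heightAt_zero]
      rw [Nat.factorial_succ]
      push_cast [Move.step]
      ring
    · -- m = H
      rw [hPd h (by simp [Move.step]), hPu h (by simp [Move.step]),
        htr h (by simp [Move.step])]
      rw [List.getElem?_cons_zero]
      rw [if_neg (by simp), if_neg (by simp)]
      ring
    · -- m = D
      have hge1 : 1 ≤ h := by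
        have := hyp 1 (by rw [hlen]; omega)
        rw [heightAt_cons, heightAt_zero] at this
        have hstep : Move.step D = -1 := rfl
        omega
      obtain ⟨k, rfl⟩ : ∃ k, h = k + 1 := ⟨h - 1, by omega⟩
      have hcast : ((k:ℕ):ℤ) = ((k+1:ℕ):ℤ) + Move.step D := by
        have hstep : Move.step D = -1 := rfl
        push_cast
        omega
      rw [hPd k hcast, hPu k hcast, htr k hcast]
      rw [List.getElem?_cons_zero]
      rw [if_pos rfl, if_neg (by simp), heightAt_zero]
      rw [Nat.factorial_succ]
      push_cast
      ring

end GPAux7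
namespace GPAux8
open Finset GPAux GPAux2 GPAux3 GPAux4

variable {n : ℕ}

/-- graph of a permutation as a finset of pairs. -/
def Gr (π : Equiv.Perm (Fin n)) : Finset (ℕ × ℕ) :=
  Finset.univ.image fun j : Fin n => ((j : ℕ), (π j : ℕ))

lemma mem_Gr {π : Equiv.Perm (Fin n)} {p : ℕ × ℕ} :
    p ∈ Gr π ↔ ∃ j : Fin n, (j : ℕ) = p.1 ∧ (π j : ℕ) = p.2 := by
  unfold Gr
  rw [Finset.mem_image]
  constructor
  · rintro ⟨j, _, he⟩
    rw [Prod.ext_iff] at he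
    exact ⟨j, he.1, he.2⟩
  · rintro ⟨j, h1, h2⟩
    exact ⟨j, Finset.mem_univ j, Prod.ext h1 h2⟩

lemma Gr_coords {π : Equiv.Perm (Fin n)} {p : ℕ × ℕ} (hp : p ∈ Gr π) : p.1 < n ∧ p.2 < n := by
  obtain ⟨j, h1, h2⟩ := mem_Gr.mp hp
  exact ⟨h1 ▸ j.is_lt, h2 ▸ (π j).is_lt⟩

lemma Gr_inj {π : Equiv.Perm (Fin n)} : Inj (Gr π) := by
  intro p hp q hq hor
  obtain ⟨j, hj1, hj2⟩ := mem_Gr.mp hp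
  obtain ⟨k, hk1, hk2⟩ := mem_Gr.mp hq
  have : j = k := by
    rcases hor with h | h
    · exact Fin.ext (by omega)
    · have : π j = π k := Fin.ext (by omega)
      exact π.injective this
  subst this
  have e1 : ((j : ℕ), (π j : ℕ)) = p := Prod.ext hj1 hj2
  have e2 : ((j : ℕ), (π j : ℕ)) = q := Prod.ext hk1 hk2
  exact e1.symm.trans e2

lemma Gr_EP {π : Equiv.Perm (Fin n)} {j : ℕ} (hj : j < n) :
    EP (Gr π) j ↔ (π ⟨j, hj⟩ : ℕ) ≤ j := by
  have hmk : ((⟨j, hj⟩ : Fin n) : ℕ) = j := rfl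
  constructor
  · rintro ⟨p, hp, h1, h2⟩
    obtain ⟨k, hk1, hk2⟩ := mem_Gr.mp hp
    have : k = ⟨j, hj⟩ := Fin.ext (by omega)
    subst this
    omega
  · intro h
    exact ⟨((j : ℕ), (π ⟨j, hj⟩ : ℕ)), mem_Gr.mpr ⟨⟨j, hj⟩, rfl, rfl⟩, rfl, h⟩

lemma Gr_EV {π : Equiv.Perm (Fin n)} {j : ℕ} (hj : j < n) :
    EV (Gr π) j ↔ (π.symm ⟨j, hj⟩ : ℕ) ≤ j := by
  have hmk : ((⟨j, hj⟩ : Fin n) : ℕ) = j := rfl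
  constructor
  · rintro ⟨p, hp, h2, h1⟩
    obtain ⟨k, hk1, hk2⟩ := mem_Gr.mp hp
    have hπ : π k = ⟨j, hj⟩ := Fin.ext (by omega)
    have : k = π.symm ⟨j, hj⟩ := by rw [← hπ]; simp
    omega
  · intro h
    refine ⟨((π.symm ⟨j, hj⟩ : ℕ), (j : ℕ)), mem_Gr.mpr ⟨π.symm ⟨j, hj⟩, rfl, by simp⟩, rfl, h⟩

lemma Gr_fix {π : Equiv.Perm (Fin n)} {j : ℕ} (hj : j < n) :
    ((j, j) ∈ Gr π) ↔ (π ⟨j, hj⟩ : ℕ) = j := by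
  have hmk : ((⟨j, hj⟩ : Fin n) : ℕ) = j := rfl
  constructor
  · intro hp
    obtain ⟨k, hk1, hk2⟩ := mem_Gr.mp hp
    have : k = ⟨j, hj⟩ := Fin.ext (by omega)
    subst this
    omega
  · intro h
    exact mem_Gr.mpr ⟨⟨j, hj⟩, rfl, h⟩

lemma symm_val_iff (π : Equiv.Perm (Fin n)) {j : ℕ} (hj : j < n) :
    (π ⟨j, hj⟩ : ℕ) = j ↔ (π.symm ⟨j, hj⟩ : ℕ) = j := by
  constructor
  · intro h
    have : π ⟨j, hj⟩ = ⟨j, hj⟩ := Fin.ext h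
    rw [(GPAux2.fix_iff π _).mp this]
  · intro h
    have : π.symm ⟨j, hj⟩ = ⟨j, hj⟩ := Fin.ext h
    rw [(GPAux2.fix_iff π _).mpr this]

/-- the graph of `π` is a complete valid matching for `toPath π`. -/
lemma Gr_valid (π : Equiv.Perm (Fin n)) : valid (toPath π) n (Gr π) := by
  refine ⟨Gr_inj, fun p hp => Gr_coords hp, ?_⟩
  intro j hj
  have hEP := Gr_EP (π := π) hj
  have hEV := Gr_EV (π := π) hj
  have hFix := Gr_fix (π := π) hj
  have hsymm := symm_val_iff π hj
  have hget := GPAux2.toPath_getElem? π j hj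
  have hltp : (π ⟨j, hj⟩ : ℕ) < n := (π ⟨j, hj⟩).is_lt
  have hlts : (π.symm ⟨j, hj⟩ : ℕ) < n := (π.symm ⟨j, hj⟩).is_lt
  refine ⟨fun h => ?_, fun h => ?_, fun h => ?_⟩
  · rw [hget, Option.some.injEq] at h
    split_ifs at h with h1 h2
    rw [hEP, hEV]
    omega
  · rw [hget, Option.some.injEq] at h
    split_ifs at h with h1 h2
    constructor
    · rw [hEP, hEV]
      omega
    · intro ha hb
      rw [hEP] at ha
      rw [hEV] at hb
      rw [hFix]
      omega
  · rw [hget, Option.some.injEq] at h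
    split_ifs at h with h1 h2
    refine ⟨?_, ?_, ?_⟩
    · rw [hEP]
      omega
    · rw [hEV]
      omega
    · rw [hFix]
      omega

lemma Gr_mem_Tset {π : Equiv.Perm (Fin n)} {mz : List Move} (h : toPath π = mz) :
    Gr π ∈ Tset mz mz.length := by
  have hlen : mz.length = n := by rw [← h, GPAux2.toPath_length]
  rw [mem_Tset]
  constructor
  · intro p hp
    have := Gr_coords hp
    rw [Finset.mem_product, Finset.mem_range, Finset.mem_range]
    omega
  · rw [← h, GPAux2.toPath_length, h]  -- fix stage
    rw [← h]
    exact Gr_valid π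

end GPAux8
namespace GPAux9
open Finset GPAux GPAux2 GPAux3 GPAux4 GPAux8

lemma Gr_injective {n : ℕ} {π π' : Equiv.Perm (Fin n)} (h : Gr π = Gr π') : π = π' := by
  apply Equiv.ext
  intro j
  have hmem : ((j : ℕ), (π j : ℕ)) ∈ Gr π' := by
    rw [← h]
    exact mem_Gr.mpr ⟨j, rfl, rfl⟩
  obtain ⟨k, hk1, hk2⟩ := mem_Gr.mp hmem
  have : k = j := Fin.ext hk1
  subst this
  exact (Fin.ext hk2 : π' k = π k).symm

lemma decode {mz : List Move} (hmz : IsMotzkin mz) {s : Finset (ℕ × ℕ)}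
    (hs : s ∈ Tset mz mz.length) :
    ∃ π : Equiv.Perm (Fin mz.length), toPath π = mz ∧ Gr π = s := by
  classical
  obtain ⟨hinj, hco, hlet⟩ := (mem_Tset.mp hs).2
  have hv : valid mz mz.length s := ⟨hinj, hco, hlet⟩
  have hfree : ∀ j < mz.length, ∃ p ∈ s, p.1 = j := by
    intro j hj
    by_contra hcon
    push_neg at hcon
    have hmemf : j ∈ freeP s mz.length := by
      rw [freeP, Finset.mem_filter, Finset.mem_range]
      exact ⟨hj, fun p hp => hcon p hp⟩
    have hcard := freeP_card mz hv le_rfl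
    rw [hmz.2] at hcard
    have hemp : freeP s mz.length = ∅ := by
      rw [← Finset.card_eq_zero]
      omega
    rw [hemp] at hmemf
    exact absurd hmemf (Finset.notMem_empty j)
  have hexu : ∀ j : Fin mz.length, ∃! p, p ∈ s ∧ p.1 = (j : ℕ) := by
    intro j
    obtain ⟨p, hp, hp1⟩ := hfree (j : ℕ) j.is_lt
    exact ⟨p, ⟨hp, hp1⟩, fun q hq => hinj q hq.1 p hp (Or.inl (by omega))⟩
  let f : Fin mz.length → Fin mz.length := fun j =>
    ⟨(Finset.choose _ s (hexu j)).2, (hco _ (Finset.choose_mem _ s (hexu j))).2⟩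
  have hfs : ∀ j : Fin mz.length, ((j : ℕ), (f j : ℕ)) ∈ s := by
    intro j
    have h1 := Finset.choose_mem (fun p => p.1 = (j : ℕ)) s (hexu j)
    have h2 := Finset.choose_property (fun p => p.1 = (j : ℕ)) s (hexu j)
    have he : ((j : ℕ), (f j : ℕ)) = Finset.choose (fun p => p.1 = (j : ℕ)) s (hexu j) :=
      Prod.ext h2.symm rfl
    rw [he]
    exact h1
  have hfinj : Function.Injective f := by
    intro j k he
    have h1 := hfs j
    have h2 := hfs k
    have he2 : (f j : ℕ) = (f k : ℕ) := by rw [he]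
    have := hinj _ h1 _ h2 (Or.inr he2)
    rw [Prod.ext_iff] at this
    exact Fin.ext this.1
  let π : Equiv.Perm (Fin mz.length) :=
    Equiv.ofBijective f ((Fintype.bijective_iff_injective_and_card f).mpr ⟨hfinj, rfl⟩)
  have hπ : ∀ j, π j = f j := fun j => rfl
  have hscard : s.card ≤ mz.length := by
    have h1 := card_valid mz hv le_rfl
    have h2 := lCt_total mz mz.length le_rfl
    have h3 := heightAt_eq_lCt mz mz.length
    have h4 := hmz.2
    omega
  have hGr : Gr π = s := by
    apply Finset.eq_of_subset_of_card_le
    · intro p hp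
      obtain ⟨j, h1, h2⟩ := mem_Gr.mp hp
      rw [hπ] at h2
      have he : ((j : ℕ), (f j : ℕ)) = p := Prod.ext h1 h2
      rw [← he]
      exact hfs j
    · have hcGr : (Gr π).card = mz.length := by
        rw [Gr, Finset.card_image_of_injective _
          (fun a b hab => Fin.ext (by rw [Prod.ext_iff] at hab; exact hab.1)),
          Finset.card_univ, Fintype.card_fin]
      rw [hcGr]
      exact hscard
  refine ⟨π, ?_, hGr⟩
  apply List.ext_getElem?
  intro i
  by_cases hi : i < mz.length
  · have hlok := hlet i hi
    have hEP : EP s i ↔ (π ⟨i, hi⟩ : ℕ) ≤ i := by rw [← hGr]; exact Gr_EP hi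
    have hEV : EV s i ↔ (π.symm ⟨i, hi⟩ : ℕ) ≤ i := by rw [← hGr]; exact Gr_EV hi
    have hFix : ((i, i) ∈ s) ↔ (π ⟨i, hi⟩ : ℕ) = i := by rw [← hGr]; exact Gr_fix hi
    have hsymm := symm_val_iff π hi
    have hsome : mz[i]? = some (mz[i]'hi) := List.getElem?_eq_getElem hi
    rcases hmm : mz[i]'hi with _ | _ | _
    · obtain ⟨hnEP, hnEV⟩ := hlok.1 (by rw [hsome, hmm])
      rw [hEP] at hnEP
      rw [hEV] at hnEV
      rw [hsome, hmm, toPath_getElem? π i hi, if_pos ⟨by omega, by omega⟩]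
    · obtain ⟨hor, hfix⟩ := hlok.2.1 (by rw [hsome, hmm])
      have hnc1 : ¬(i < (π ⟨i, hi⟩ : ℕ) ∧ i < (π.symm ⟨i, hi⟩ : ℕ)) := by
        rcases hor with h | h
        · rw [hEP] at h; omega
        · rw [hEV] at h; omega
      have hnc2 : ¬((π ⟨i, hi⟩ : ℕ) < i ∧ (π.symm ⟨i, hi⟩ : ℕ) < i) := by
        rintro ⟨ha, hb⟩
        have := hfix (hEP.mpr (le_of_lt ha)) (hEV.mpr (le_of_lt hb))
        rw [hFix] at this
        omega
      rw [hsome, hmm, toPath_getElem? π i hi, if_neg hnc1, if_neg hnc2]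
    · obtain ⟨hEPa, hEVa, hnf⟩ := hlok.2.2 (by rw [hsome, hmm])
      rw [hEP] at hEPa
      rw [hEV] at hEVa
      rw [hFix] at hnf
      have hlt1 : (π ⟨i, hi⟩ : ℕ) < i := by omega
      have hlt2 : (π.symm ⟨i, hi⟩ : ℕ) < i := by
        have : (π.symm ⟨i, hi⟩ : ℕ) ≠ i := fun hh => hnf (hsymm.mpr hh)
        omega
      rw [hsome, hmm, toPath_getElem? π i hi, if_neg (by omega), if_pos ⟨hlt1, hlt2⟩]
  · rw [List.getElem?_eq_none (le_of_not_gt hi),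
      List.getElem?_eq_none (by rw [toPath_length]; omega)]

lemma fiber_card_eq (mz : List Move) (hmz : IsMotzkin mz) :
    ((univ : Finset (Equiv.Perm (Fin mz.length))).filter fun π => toPath π = mz).card
      = (Tset mz mz.length).card := by
  classical
  apply Finset.card_bij (fun π _ => Gr π)
  · intro π hπ
    exact Gr_mem_Tset (Finset.mem_filter.mp hπ).2
  · intro π h π' h' he
    exact Gr_injective he
  · intro s hs
    obtain ⟨π, h1, h2⟩ := decode hmz hs
    exact ⟨π, Finset.mem_filter.mpr ⟨Finset.mem_univ _, h1⟩, h2⟩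

end GPAux9
namespace GPAux10
open Finset GPAux GPAux2 GPAux3 GPAux4 GPAux7

def uF (mz : List Move) (i : ℕ) : ℤ := if mz[i]? = some U then heightAt mz (i+1) else 1
def hF (mz : List Move) (i : ℕ) : ℤ := if mz[i]? = some H then 2 * heightAt mz i + 1 else 1
def dF (mz : List Move) (i : ℕ) : ℤ := if mz[i]? = some D then heightAt mz i else 1

lemma moveWeight_split (mz : List Move) {i : ℕ} (hil : i < mz.length) :
    moveWeight mz i = uF mz i * hF mz i * dF mz i := by
  have hsome : mz[i]? = some (mz[i]'hil) := List.getElem?_eq_getElem hil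
  unfold moveWeight uF hF dF
  rcases hmm : mz[i]'hil with _ | _ | _ <;> rw [hsome, hmm] <;> simp

lemma ccZ_split (mz : List Move) (hnn : ∀ k, 0 ≤ heightAt mz k) {i : ℕ} (hil : i < mz.length) :
    ((cc mz i : ℕ) : ℤ) = hF mz i * dF mz i * dF mz i := by
  have hsome : mz[i]? = some (mz[i]'hil) := List.getElem?_eq_getElem hil
  have hnni := hnn i
  unfold cc hF dF
  rcases hmm : mz[i]'hil with _ | _ | _ <;> rw [hsome, hmm] <;> simp
  · omega
  · rw [sup_eq_left.mpr hnni, pow_two]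

lemma weight_eq_prod_cc (mz : List Move) (hmz : IsMotzkin mz) :
    weight mz = ∏ j ∈ range mz.length, ((cc mz j : ℕ) : ℤ) := by
  have h1 : ∏ i ∈ range mz.length, moveWeight mz i
      = (∏ i ∈ range mz.length, uF mz i) * (∏ i ∈ range mz.length, hF mz i)
        * (∏ i ∈ range mz.length, dF mz i) := by
    rw [← Finset.prod_mul_distrib, ← Finset.prod_mul_distrib]
    exact Finset.prod_congr rfl fun i hi => moveWeight_split mz (mem_range.mp hi)
  have h2 : ∏ i ∈ range mz.length, ((cc mz i : ℕ) : ℤ)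
      = (∏ i ∈ range mz.length, hF mz i) * (∏ i ∈ range mz.length, dF mz i)
        * (∏ i ∈ range mz.length, dF mz i) := by
    rw [← Finset.prod_mul_distrib, ← Finset.prod_mul_distrib]
    exact Finset.prod_congr rfl fun i hi => ccZ_split mz hmz.1 (mem_range.mp hi)
  have hPu : ∏ i ∈ range mz.length, uF mz i = Pu mz 0 := by
    rw [Pu]
    apply Finset.prod_congr rfl
    intro i _
    rw [uF]
    norm_num
  have hPd : ∏ i ∈ range mz.length, dF mz i = Pd mz 0 := by
    rw [Pd]
    apply Finset.prod_congr rfl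
    intro i _
    rw [dF]
    norm_num
  have hkey := Pu_Pd mz 0 (fun i _ => by simpa using hmz.1 i) (by simpa using hmz.2)
  have hud : ∏ i ∈ range mz.length, uF mz i = ∏ i ∈ range mz.length, dF mz i := by
    rw [hPu, hPd, hkey]
    simp
  rw [weight, h1, h2, hud]
  ring

end GPAux10
/-- `D(n,d) = Σ_{mz ∈ MZ(n,d)} ω(mz)`. -/
theorem displacement_count_eq_weighted_motzkin_sum (n d : ℕ) :
    (Nat.card {π : Equiv.Perm (Fin n) // totalDisp π = 2 * (d : ℤ)} : ℤ) =
      ∑ᶠ mz ∈ MZ n d, weight mz := by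
  classical
  open Finset GPAux GPAux2 GPAux3 GPAux4 GPAux7 GPAux8 GPAux9 GPAux10 in
  have hMZfin : (MZ n d).Finite :=
    Set.Finite.subset (List.finite_length_eq Move n) (fun mz hmz => hmz.1)
  rw [show (MZ n d) = ↑hMZfin.toFinset from hMZfin.coe_toFinset.symm, finsum_mem_coe_finset]
  rw [Nat.card_eq_fintype_card, Fintype.card_subtype]
  have hiff : ∀ π : Equiv.Perm (Fin n), totalDisp π = 2 * (d : ℤ) ↔ toPath π ∈ MZ n d := by
    intro π
    have h2a := GPAux2.area_toPath π
    constructor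
    · intro h
      refine ⟨GPAux2.toPath_length π, GPAux2.isMotzkin_toPath π, by omega⟩
    · rintro ⟨_, _, harea⟩
      omega
  rw [Finset.filter_congr (fun π _ => hiff π)]
  have hmap : ∀ π ∈ Finset.univ.filter (fun π : Equiv.Perm (Fin n) => toPath π ∈ MZ n d),
      toPath π ∈ hMZfin.toFinset := by
    intro π hπ
    rw [Set.Finite.mem_toFinset]
    exact (Finset.mem_filter.mp hπ).2
  rw [Finset.card_eq_sum_card_fiberwise hmap]
  push_cast
  apply Finset.sum_congr rfl
  intro mz hmzmem
  rw [Set.Finite.mem_toFinset] at hmzmem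
  obtain ⟨hlen, hmot, harea⟩ := hmzmem
  have hfil : (Finset.univ.filter (fun π : Equiv.Perm (Fin n) => toPath π ∈ MZ n d)).filter
      (fun π => toPath π = mz)
      = Finset.univ.filter (fun π : Equiv.Perm (Fin n) => toPath π = mz) := by
    ext π
    simp only [Finset.mem_filter, Finset.mem_univ, true_and]
    constructor
    · rintro ⟨_, h⟩
      exact h
    · intro h
      exact ⟨by rw [h]; exact ⟨hlen, hmot, harea⟩, h⟩
  rw [hfil]
  subst hlen
  rw [GPAux9.fiber_card_eq mz hmot, GPAux7.Tset_card mz mz.length le_rfl,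
    GPAux10.weight_eq_prod_cc mz hmot]
  push_cast
  rfl
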